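/- Let (A,B,C) be an LR triple on V with tridiagonal space 𝒳, and let {E'_i}, {E''_i} be the idempotent sequences of the (B,C)- and (C,A)-decompositions of V. Then the subspaces 𝒳E'_d = {XE'_d : X ∈ 𝒳}, E''_d𝒳 = {E''_dX : X ∈ 𝒳}, and 𝒳AE'_d = {XAE'_d : X ∈ 𝒳} of End(V) satisfy dim(𝒳E'_d) ≤ 2, dim(E''_d𝒳) ≤ 2, and dim(𝒳AE'_d) ≤ 3. -/

import Mathlib

/-- A decomposition of `V` of diameter `d`: a sequence of one-dimensional subspaces
`sub 0, …, sub d` whose (direct) sum is `V`; by convention `sub i = ⊥` for `i > d`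
(encoding `V_{-1} = 0` and `V_{d+1} = 0`). -/
structure LRDecomp (F : Type*) [Field F] (V : Type*) [AddCommGroup V] [Module F V]
    (d : ℕ) where
  sub : ℕ → Submodule F V
  finrank_eq_one : ∀ i ≤ d, Module.finrank F (sub i) = 1
  eq_bot_of_gt : ∀ i, d < i → sub i = ⊥
  isInternal : DirectSum.IsInternal fun i : Fin (d + 1) => sub i.val

variable {F : Type*} [Field F] {V : Type*} [AddCommGroup V] [Module F V]

/-- `A` lowers the decomposition: `A V_i = V_{i-1}` for `0 ≤ i ≤ d` (with `V_{-1} = 0`). -/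
def Lowers {d : ℕ} (A : Module.End F V) (D : LRDecomp F V d) : Prop :=
  Submodule.map A (D.sub 0) = ⊥ ∧ ∀ i < d, Submodule.map A (D.sub (i + 1)) = D.sub i

/-- `B` raises the decomposition: `B V_i = V_{i+1}` for `0 ≤ i ≤ d` (with `V_{d+1} = 0`). -/
def Raises {d : ℕ} (B : Module.End F V) (D : LRDecomp F V d) : Prop :=
  ∀ i ≤ d, Submodule.map B (D.sub i) = D.sub (i + 1)

/-- `D` is the (A,B)-decomposition: it is lowered by `A` and raised by `B`. -/
def IsLRPairWith {d : ℕ} (A B : Module.End F V) (D : LRDecomp F V d) : Prop :=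
  Lowers A D ∧ Raises B D

/-- `(A,B,C)` is an LR triple of diameter `d`. -/
def IsLRTriple (d : ℕ) (A B C : Module.End F V) : Prop :=
  (∃ D : LRDecomp F V d, IsLRPairWith A B D) ∧
  (∃ D : LRDecomp F V d, IsLRPairWith B C D) ∧
  (∃ D : LRDecomp F V d, IsLRPairWith C A D)

/-- `X` is tridiagonal with respect to the decomposition `D`:
`X V_i ⊆ V_{i-1} + V_i + V_{i+1}` (note `V_{0-1} ⊔ V_0 = V_0` makes `ℕ`-subtraction correct). -/
def IsTridiagonal {d : ℕ} (X : Module.End F V) (D : LRDecomp F V d) : Prop :=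
  ∀ i, ∀ v ∈ D.sub i, X v ∈ D.sub (i - 1) ⊔ D.sub i ⊔ D.sub (i + 1)

/-- The tridiagonal space of the LR triple with decompositions `D₁, D₂, D₃`. -/
def tridiagSpace {d : ℕ} (D₁ D₂ D₃ : LRDecomp F V d) : Submodule F (Module.End F V) where
  carrier := {X | IsTridiagonal X D₁ ∧ IsTridiagonal X D₂ ∧ IsTridiagonal X D₃}
  add_mem' := by
    rintro X Y ⟨hX1, hX2, hX3⟩ ⟨hY1, hY2, hY3⟩
    exact ⟨fun i v hv => by simpa using add_mem (hX1 i v hv) (hY1 i v hv),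
           fun i v hv => by simpa using add_mem (hX2 i v hv) (hY2 i v hv),
           fun i v hv => by simpa using add_mem (hX3 i v hv) (hY3 i v hv)⟩
  zero_mem' :=
    ⟨fun i v _ => by simp,
     fun i v _ => by simp,
     fun i v _ => by simp⟩
  smul_mem' := by
    rintro c X ⟨hX1, hX2, hX3⟩
    exact ⟨fun i v hv => by simpa using Submodule.smul_mem _ c (hX1 i v hv),
           fun i v hv => by simpa using Submodule.smul_mem _ c (hX2 i v hv),
           fun i v hv => by simpa using Submodule.smul_mem _ c (hX3 i v hv)⟩

/-- `E` is the idempotent sequence of the decomposition `D`: each `E i` acts as the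
identity on `sub i` and as zero on `sub j` for `j ≠ i`. -/
def IsIdemSeq {d : ℕ} (D : LRDecomp F V d) (E : ℕ → Module.End F V) : Prop :=
  ∀ i, (∀ v ∈ D.sub i, E i v = v) ∧ ∀ j, j ≠ i → ∀ v ∈ D.sub j, E i v = 0

/-- Bipartite: all trace data `a_i = tr(C E_i)`, `a'_i = tr(A E'_i)`, `a''_i = tr(B E''_i)`
vanish, where `E, E', E''` are the idempotent data of the triple `(A,B,C)`. -/
def IsBipartite (d : ℕ) (A B C : Module.End F V)
    (E E' E'' : ℕ → Module.End F V) : Prop :=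
  ∀ i ≤ d, LinearMap.trace F V (C * E i) = 0 ∧
    LinearMap.trace F V (A * E' i) = 0 ∧ LinearMap.trace F V (B * E'' i) = 0

/-- An LR pair `(A,B)` has `q`-Weyl type. -/
def IsQWeylPair (q : F) (A B : Module.End F V) : Prop :=
  q ≠ 0 ∧ q ^ 2 ≠ 1 ∧ q • (A * B) - q⁻¹ • (B * A) = (q - q⁻¹) • (1 : Module.End F V)

/-- An LR triple `(A,B,C)` has `q`-Weyl type. -/
def IsQWeylTriple (q : F) (A B C : Module.End F V) : Prop :=
  IsQWeylPair q A B ∧ IsQWeylPair q B C ∧ IsQWeylPair q C A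

/-- `v` is an `(A,B)`-basis, relative to the `(A,B)`-decomposition `D`:
`v i ∈ sub i` is nonzero and `A v_i = v_{i-1}`. -/
def IsLRBasisFor {d : ℕ} (A : Module.End F V) (D : LRDecomp F V d) (v : ℕ → V) : Prop :=
  (∀ i ≤ d, v i ∈ D.sub i ∧ v i ≠ 0) ∧ ∀ i, 1 ≤ i → i ≤ d → A (v i) = v (i - 1)

/-- `v` is a `(B,A)`-style basis relative to the `(A,B)`-decomposition `D` of the
reversed pair: `v i ∈ sub (d-i)` is nonzero and the lowering map sends `v i ↦ v (i-1)`.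
(Used for `(C,B)`-bases relative to the `(B,C)`-decomposition, etc.) -/
def IsLRBasisRev {d : ℕ} (A : Module.End F V) (D : LRDecomp F V d) (v : ℕ → V) : Prop :=
  (∀ i ≤ d, v i ∈ D.sub (d - i) ∧ v i ≠ 0) ∧ ∀ i, 1 ≤ i → i ≤ d → A (v i) = v (i - 1)

/-- The transition matrix from the basis `u` to the basis `w` is upper triangular
Toeplitz with parameters `α`: `w j = ∑_{i ≤ j} α_{j-i} u_i`. -/
def IsToeplitzTransition (d : ℕ) (u w : ℕ → V) (α : ℕ → F) : Prop :=
  ∀ j ≤ d, w j = ∑ i ∈ Finset.range (j + 1), α (j - i) • u i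

/-- `φ` is the parameter sequence of the LR pair `(A,B)` with `(A,B)`-decomposition `D`:
`BA` acts on `V_i` as `φ i` for `1 ≤ i ≤ d`, with conventions `φ 0 = 0 = φ (d+1)`. -/
def IsParamSeq {d : ℕ} (A B : Module.End F V) (D : LRDecomp F V d) (φ : ℕ → F) : Prop :=
  φ 0 = 0 ∧ φ (d + 1) = 0 ∧ ∀ i, 1 ≤ i → i ≤ d → ∀ v ∈ D.sub i, B (A v) = φ i • v


section Aux

variable {F : Type*} [Field F] {V : Type*} [AddCommGroup V] [Module F V] [FiniteDimensional F V]

lemma LRDecomp.exists_ne_zero' {d : ℕ} (D : LRDecomp F V d) {i : ℕ} (hi : i ≤ d) :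
    ∃ v ∈ D.sub i, v ≠ 0 := by
  have h := D.finrank_eq_one i hi
  have hpos : 0 < Module.finrank F ↥(D.sub i) := by omega
  obtain ⟨x, hx⟩ := Module.finrank_pos_iff_exists_ne_zero.mp hpos
  exact ⟨↑x, x.2, fun h0 => hx (Subtype.ext h0)⟩

lemma LRDecomp.mem_eq_smul {d : ℕ} (D : LRDecomp F V d) {i : ℕ} (hi : i ≤ d) {v w : V}
    (hv : v ∈ D.sub i) (hv0 : v ≠ 0) (hw : w ∈ D.sub i) : ∃ c : F, w = c • v := by
  have h := (finrank_eq_one_iff_of_nonzero' (⟨v, hv⟩ : D.sub i)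
      (fun h => hv0 (congrArg Subtype.val h))).mp (D.finrank_eq_one i hi) ⟨w, hw⟩
  obtain ⟨c, hc⟩ := h
  exact ⟨c, by simpa using (congrArg Subtype.val hc).symm⟩

lemma LRDecomp.end_eq_zero {d : ℕ} (D : LRDecomp F V d) {X : Module.End F V}
    (h : ∀ i : Fin (d + 1), D.sub ↑i ≤ LinearMap.ker X) : X = 0 := by
  have htop := D.isInternal.submodule_iSup_eq_top
  have hle : ⊤ ≤ LinearMap.ker X := by rw [← htop]; exact iSup_le h
  exact LinearMap.ker_eq_top.mp (top_le_iff.mp hle)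

lemma card_le_finrank_of_indep {ι : Type*} [Fintype ι] {p : ι → Submodule F V}
    (hp : iSupIndep p) {W : Submodule F V} (hW : ∀ i, p i ≤ W)
    (hne : ∀ i, ∃ v ∈ p i, v ≠ 0) : Fintype.card ι ≤ Module.finrank F W := by
  choose v hv h0 using hne
  have li : LinearIndependent F v := iSupIndep.linearIndependent p hp hv h0
  have li2 : LinearIndependent F (fun i => (⟨v i, hW i (hv i)⟩ : ↥W)) := by
    apply LinearIndependent.of_comp W.subtype
    exact li
  simpa using li2.fintype_card_le_finrank

lemma finrank_ker_le_one_of_lowers {d : ℕ} (hdim : Module.finrank F V = d + 1)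
    {C : Module.End F V} (D : LRDecomp F V d) (hC : Lowers C D) :
    Module.finrank F ↥(LinearMap.ker C) ≤ 1 := by
  have hind := D.isInternal.submodule_iSupIndep
  have hcomp : iSupIndep (fun i : Fin d => D.sub ↑(Fin.castSucc i)) :=
    hind.comp (Fin.castSucc_injective d)
  have hle : ∀ i : Fin d, D.sub ↑(Fin.castSucc i) ≤ LinearMap.range C := by
    intro i
    have h := hC.2 ↑i i.isLt
    have he : D.sub ↑(Fin.castSucc i) = Submodule.map C (D.sub (↑i + 1)) := by
      rw [h]; simp
    rw [he]
    exact LinearMap.map_le_range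
  have hcard := card_le_finrank_of_indep hcomp hle
    (fun i => D.exists_ne_zero' (by simpa using i.isLt.le))
  have hrn := LinearMap.finrank_range_add_finrank_ker C
  rw [hdim] at hrn
  simp only [Fintype.card_fin] at hcard
  omega

lemma finrank_ker_sq_le_two {C : Module.End F V}
    (h1 : Module.finrank F ↥(LinearMap.ker C) ≤ 1) :
    Module.finrank F ↥(LinearMap.ker (C * C)) ≤ 2 := by
  set K2 := LinearMap.ker (C * C) with hK2
  let g : ↥K2 →ₗ[F] V := C ∘ₗ K2.subtype
  have hr : LinearMap.range g ≤ LinearMap.ker C := by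
    rintro _ ⟨x, rfl⟩
    have hx : (C * C) (↑x : V) = 0 := x.2
    rw [Module.End.mul_apply] at hx
    rw [LinearMap.mem_ker]
    exact hx
  have hk : Submodule.map K2.subtype (LinearMap.ker g) ≤ LinearMap.ker C := by
    rintro _ ⟨x, hx, rfl⟩
    have hx' : g x = 0 := LinearMap.mem_ker.mp hx
    rw [LinearMap.mem_ker]
    exact hx'
  have e := (Submodule.equivMapOfInjective K2.subtype (Submodule.injective_subtype K2)
      (LinearMap.ker g)).finrank_eq
  have h2 := Submodule.finrank_mono hr
  have h3 := Submodule.finrank_mono hk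
  have hrn := LinearMap.finrank_range_add_finrank_ker g
  omega

lemma raise_mem_sup {d : ℕ} (hdim : Module.finrank F V = d + 1) (hd : 1 ≤ d)
    {A B C : Module.End F V} {DBC DCA : LRDecomp F V d}
    (hBC : IsLRPairWith B C DBC) (hCA : IsLRPairWith C A DCA)
    {v : V} (hv : v ∈ DBC.sub d) : A v ∈ DBC.sub (d - 1) ⊔ DBC.sub d := by
  have hker1 := finrank_ker_le_one_of_lowers hdim DCA hCA.1
  have hCv : ∀ z ∈ DBC.sub d, C z = 0 := by
    intro z hz
    have hm : C z ∈ Submodule.map C (DBC.sub d) := Submodule.mem_map_of_mem hz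
    rw [hBC.2 d le_rfl, DBC.eq_bot_of_gt (d + 1) (by omega)] at hm
    simpa using hm
  have h0le : DCA.sub 0 ≤ LinearMap.ker C := by
    intro z hz
    have hm : C z ∈ Submodule.map C (DCA.sub 0) := Submodule.mem_map_of_mem hz
    rw [hCA.1.1] at hm
    simpa [LinearMap.mem_ker] using hm
  have h0 : DCA.sub 0 = LinearMap.ker C := by
    apply Submodule.eq_of_le_of_finrank_le h0le
    rw [DCA.finrank_eq_one 0 (Nat.zero_le d)]
    exact hker1
  have hv0 : v ∈ DCA.sub 0 := by rw [h0]; exact LinearMap.mem_ker.mpr (hCv v hv)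
  have hAv : A v ∈ DCA.sub 1 := by
    have hm : A v ∈ Submodule.map A (DCA.sub 0) := Submodule.mem_map_of_mem hv0
    rwa [hCA.2 0 (Nat.zero_le d)] at hm
  have hK2 := finrank_ker_sq_le_two (F := F) (V := V) (C := C) hker1
  have h1k : DCA.sub 1 ≤ LinearMap.ker (C * C) := by
    intro z hz
    have hm1 : C z ∈ Submodule.map C (DCA.sub 1) := Submodule.mem_map_of_mem hz
    rw [hCA.1.2 0 hd] at hm1
    have hm2 : C (C z) ∈ Submodule.map C (DCA.sub 0) := Submodule.mem_map_of_mem hm1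
    rw [hCA.1.1] at hm2
    simpa [LinearMap.mem_ker, Module.End.mul_apply] using hm2
  have hsuple : DBC.sub (d - 1) ⊔ DBC.sub d ≤ LinearMap.ker (C * C) := by
    apply sup_le
    · intro z hz
      have hm1 : C z ∈ Submodule.map C (DBC.sub (d - 1)) := Submodule.mem_map_of_mem hz
      rw [hBC.2 (d - 1) (Nat.sub_le d 1), show d - 1 + 1 = d from by omega] at hm1
      simp [LinearMap.mem_ker, Module.End.mul_apply, hCv _ hm1]
    · intro z hz
      simp [LinearMap.mem_ker, Module.End.mul_apply, hCv z hz]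
  have hsub2 : 2 ≤ Module.finrank F ↥(DBC.sub (d - 1) ⊔ DBC.sub d) := by
    have hdisj : Disjoint (DBC.sub (d - 1)) (DBC.sub d) := by
      have h := DBC.isInternal.submodule_iSupIndep.pairwiseDisjoint
        (i := (⟨d - 1, by omega⟩ : Fin (d + 1))) (j := (⟨d, by omega⟩ : Fin (d + 1)))
        (by simp only [ne_eq, Fin.mk.injEq]; omega)
      simpa [Function.onFun] using h
    have hsum := Submodule.finrank_sup_add_finrank_inf_eq (DBC.sub (d - 1)) (DBC.sub d)
    rw [hdisj.eq_bot, DBC.finrank_eq_one (d - 1) (Nat.sub_le d 1),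
      DBC.finrank_eq_one d le_rfl] at hsum
    rw [finrank_bot F V] at hsum
    omega
  have heq : DBC.sub (d - 1) ⊔ DBC.sub d = LinearMap.ker (C * C) :=
    Submodule.eq_of_le_of_finrank_le hsuple (le_trans hK2 hsub2)
  rw [heq]
  exact h1k hAv

lemma bound_mulRight {d : ℕ} (𝒳 : Submodule F (Module.End F V)) (R : Module.End F V)
    (D : LRDecomp F V d) {v : V} (hv : v ∈ D.sub d) (hv0 : v ≠ 0)
    (hkill : ∀ i : Fin (d + 1), (↑i : ℕ) ≠ d → ∀ w ∈ D.sub ↑i, R w = 0)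
    (W : Submodule F V) (hW : ∀ X ∈ 𝒳, (X * R) v ∈ W) :
    Module.finrank F ↥(Submodule.map (LinearMap.mulRight F R) 𝒳) ≤ Module.finrank F ↥W := by
  set S := Submodule.map (LinearMap.mulRight F R) 𝒳 with hS
  have hmem : ∀ x : ↥S, (↑x : Module.End F V) v ∈ W := by
    intro x
    obtain ⟨Y, hY, hYx⟩ := Submodule.mem_map.mp x.2
    rw [← hYx, LinearMap.mulRight_apply]
    exact hW Y hY
  let g : ↥S →ₗ[F] ↥W :=
    { toFun := fun x => ⟨(↑x : Module.End F V) v, hmem x⟩,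
      map_add' := by intro x y; ext; simp
      map_smul' := by intro c x; ext; simp }
  have hker : LinearMap.ker g = ⊥ := by
    rw [Submodule.eq_bot_iff]
    intro x hx
    have hxv : (↑x : Module.End F V) v = 0 := by
      have h := LinearMap.mem_ker.mp hx
      exact congrArg Subtype.val h
    obtain ⟨Y, hY, hYx⟩ := Submodule.mem_map.mp x.2
    have hX0 : (↑x : Module.End F V) = 0 := by
      apply D.end_eq_zero
      intro i w hw
      rw [LinearMap.mem_ker]
      by_cases hi : (↑i : ℕ) = d
      · obtain ⟨c, rfl⟩ := D.mem_eq_smul le_rfl hv hv0 (show w ∈ D.sub d from by rwa [hi] at hw)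
        rw [map_smul, hxv, smul_zero]
      · rw [← hYx, LinearMap.mulRight_apply, Module.End.mul_apply, hkill i hi w hw, map_zero]
    exact Subtype.ext hX0
  exact LinearMap.finrank_le_finrank_of_injective (LinearMap.ker_eq_bot.mp hker)

end Aux

theorem stmt8
    {F : Type*} [Field F] {V : Type*} [AddCommGroup V] [Module F V]
    [FiniteDimensional F V] {d : ℕ} (hdim : Module.finrank F V = d + 1)
    (A B C : Module.End F V) (DAB DBC DCA : LRDecomp F V d)
    (hAB : IsLRPairWith A B DAB) (hBC : IsLRPairWith B C DBC) (hCA : IsLRPairWith C A DCA)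
    (E' E'' : ℕ → Module.End F V)
    (hE' : IsIdemSeq DBC E') (hE'' : IsIdemSeq DCA E'') :
    Module.finrank F (Submodule.map (LinearMap.mulRight F (E' d)) (tridiagSpace DAB DBC DCA)) ≤ 2 ∧
    Module.finrank F (Submodule.map (LinearMap.mulLeft F (E'' d)) (tridiagSpace DAB DBC DCA)) ≤ 2 ∧
    Module.finrank F (Submodule.map (LinearMap.mulRight F (A * E' d)) (tridiagSpace DAB DBC DCA)) ≤ 3 := by
  refine ⟨?_, ?_, ?_⟩
  · -- 𝒳 E'_d
    obtain ⟨v, hv, hv0⟩ := DBC.exists_ne_zero' (le_refl d)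
    have hb := bound_mulRight (tridiagSpace DAB DBC DCA) (E' d) DBC hv hv0
      (fun i hi w hw => (hE' d).2 ↑i hi w hw)
      (DBC.sub (d - 1) ⊔ DBC.sub d)
      (by
        intro X hX
        rw [Module.End.mul_apply, (hE' d).1 v hv]
        have h := hX.2.1 d v hv
        rwa [DBC.eq_bot_of_gt (d + 1) (by omega), sup_bot_eq] at h)
    refine hb.trans ?_
    refine (Submodule.finrank_add_le_finrank_add_finrank _ _).trans ?_
    rw [DBC.finrank_eq_one (d - 1) (Nat.sub_le d 1), DBC.finrank_eq_one d le_rfl]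
  · -- E''_d 𝒳
    obtain ⟨u, hu, hu0⟩ := DCA.exists_ne_zero' (Nat.sub_le d 1)
    obtain ⟨w, hw, hw0⟩ := DCA.exists_ne_zero' (le_refl d)
    set S := Submodule.map (LinearMap.mulLeft F (E'' d)) (tridiagSpace DAB DBC DCA) with hSdef
    have hE''range : ∀ z : V, E'' d z ∈ DCA.sub d := by
      intro z
      have hz : z ∈ ⨆ i : Fin (d + 1), DCA.sub ↑i := by
        rw [DCA.isInternal.submodule_iSup_eq_top]; exact Submodule.mem_top
      refine Submodule.iSup_induction _ (motive := fun z => E'' d z ∈ DCA.sub d) hz ?_ (by simp) ?_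
      · intro i y hy
        by_cases hi : (↑i : ℕ) = d
        · rw [(hE'' d).1 y (by rwa [hi] at hy)]
          rwa [hi] at hy
        · rw [(hE'' d).2 ↑i hi y hy]; exact zero_mem _
      · intro a b ha hb; rw [map_add]; exact add_mem ha hb
    have hmem : ∀ (x : ↥S) (z : V), (↑x : Module.End F V) z ∈ DCA.sub d := by
      intro x z
      obtain ⟨Y, hY, hYx⟩ := Submodule.mem_map.mp x.2
      rw [← hYx, LinearMap.mulLeft_apply, Module.End.mul_apply]
      exact hE''range (Y z)
    let g : ↥S →ₗ[F] (↥(DCA.sub d) × ↥(DCA.sub d)) :=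
      { toFun := fun x => (⟨(↑x : Module.End F V) u, hmem x u⟩,
          ⟨(↑x : Module.End F V) w, hmem x w⟩),
        map_add' := by intro x y; ext <;> simp
        map_smul' := by intro c x; ext <;> simp }
    have hker : LinearMap.ker g = ⊥ := by
      rw [Submodule.eq_bot_iff]
      intro x hx
      have h := LinearMap.mem_ker.mp hx
      rw [Prod.ext_iff] at h
      have h1 : (↑x : Module.End F V) u = 0 := congrArg Subtype.val h.1
      have h2 : (↑x : Module.End F V) w = 0 := congrArg Subtype.val h.2
      obtain ⟨Y, hY, hYx⟩ := Submodule.mem_map.mp x.2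
      refine Subtype.ext (DCA.end_eq_zero ?_)
      intro i z hz
      rw [LinearMap.mem_ker]
      by_cases hi : (↑i : ℕ) = d
      · obtain ⟨c, rfl⟩ := DCA.mem_eq_smul le_rfl hw hw0 (show z ∈ DCA.sub d from by rwa [hi] at hz)
        rw [map_smul, h2, smul_zero]
      · have hid : (↑i : ℕ) < d := by have := i.isLt; omega
        by_cases hi' : (↑i : ℕ) = d - 1
        · obtain ⟨c, rfl⟩ := DCA.mem_eq_smul (Nat.sub_le d 1) hu hu0
            (show z ∈ DCA.sub (d - 1) from by rwa [hi'] at hz)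
          rw [map_smul, h1, smul_zero]
        · rw [← hYx, LinearMap.mulLeft_apply, Module.End.mul_apply]
          have ht := hY.2.2 ↑i z hz
          have hkill : DCA.sub (↑i - 1) ⊔ DCA.sub ↑i ⊔ DCA.sub (↑i + 1) ≤
              LinearMap.ker (E'' d) := by
            have hk : ∀ k : ℕ, k ≠ d → DCA.sub k ≤ LinearMap.ker (E'' d) := by
              intro k hk z' hz'
              rw [LinearMap.mem_ker]
              exact (hE'' d).2 k hk z' hz'
            exact sup_le (sup_le (hk _ (by omega)) (hk _ hi)) (hk _ (by omega))
          have hm := hkill ht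
          rwa [LinearMap.mem_ker] at hm
    have hfin := LinearMap.finrank_le_finrank_of_injective (LinearMap.ker_eq_bot.mp hker)
    refine hfin.trans ?_
    rw [Module.finrank_prod, DCA.finrank_eq_one d le_rfl]
  · -- 𝒳 A E'_d
    obtain ⟨v, hv, hv0⟩ := DBC.exists_ne_zero' (le_refl d)
    by_cases hd : d = 0
    · have hb := bound_mulRight (tridiagSpace DAB DBC DCA) (A * E' d) DBC hv hv0
        (fun i hi w hw => by
          rw [Module.End.mul_apply, (hE' d).2 ↑i hi w hw, map_zero])
        ⊤ (fun X _ => Submodule.mem_top)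
      refine hb.trans ?_
      rw [finrank_top, hdim, hd]
      omega
    · have hb := bound_mulRight (tridiagSpace DAB DBC DCA) (A * E' d) DBC hv hv0
        (fun i hi w hw => by
          rw [Module.End.mul_apply, (hE' d).2 ↑i hi w hw, map_zero])
        ((DBC.sub (d - 2) ⊔ DBC.sub (d - 1)) ⊔ DBC.sub d)
        (by
          intro X hX
          rw [Module.End.mul_apply, Module.End.mul_apply, (hE' d).1 v hv]
          have hAv := raise_mem_sup hdim (by omega) hBC hCA hv
          obtain ⟨p, hp, q, hq, hpq⟩ := Submodule.mem_sup.mp hAv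
          rw [← hpq, map_add]
          apply add_mem
          · have h := hX.2.1 (d - 1) p hp
            rwa [show d - 1 - 1 = d - 2 from by omega, show d - 1 + 1 = d from by omega] at h
          · have h := hX.2.1 d q hq
            rw [DBC.eq_bot_of_gt (d + 1) (by omega), sup_bot_eq] at h
            have hle2 : DBC.sub (d - 1) ⊔ DBC.sub d ≤
                (DBC.sub (d - 2) ⊔ DBC.sub (d - 1)) ⊔ DBC.sub d :=
              sup_le (le_trans le_sup_right le_sup_left) le_sup_right
            exact hle2 h)
      refine hb.trans ?_
      refine (Submodule.finrank_add_le_finrank_add_finrank _ _).trans ?_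
      have h1 := Submodule.finrank_add_le_finrank_add_finrank (DBC.sub (d - 2)) (DBC.sub (d - 1))
      rw [DBC.finrank_eq_one (d - 2) (by omega), DBC.finrank_eq_one (d - 1) (by omega)] at h1
      rw [DBC.finrank_eq_one d le_rfl]
      omega
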